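/- Let w ∈ ℝ^d be nonzero and let ŵ be its random sketch (choose index i with probability p_i = w_i²/(2‖w‖²) + 1/(2d), set ŵ = (⌊w_i/p_i⌋ + b)·e_i with b Bernoulli of parameter w_i/p_i − ⌊w_i/p_i⌋). Then for every unit vector u ∈ ℝ^d, E[⟨u, ŵ⟩²] ≤ 1/4 + 2‖w‖². -/

import Mathlib

open Finset

/-- Probability of choosing index `i` in the random sketch of `w`. -/
noncomputable def sketchP {d : ℕ} (w : Fin d → ℝ) (i : Fin d) : ℝ :=
  w i ^ 2 / (2 * ∑ j, w j ^ 2) + 1 / (2 * d)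

/-- Probability mass of the outcome `(i, b)` of the random sketch. -/
noncomputable def sketchMass {d : ℕ} (w : Fin d → ℝ) (x : Fin d × Bool) : ℝ :=
  sketchP w x.1 *
    (if x.2 then w x.1 / sketchP w x.1 - ⌊w x.1 / sketchP w x.1⌋
     else 1 - (w x.1 / sketchP w x.1 - ⌊w x.1 / sketchP w x.1⌋))

/-- The value `(⌊w_i/p_i⌋ + b) • e_i` of the random sketch at outcome `(i, b)`. -/
noncomputable def sketchVal {d : ℕ} (w : Fin d → ℝ) (x : Fin d × Bool) : Fin d → ℝ :=
  fun j => if j = x.1 then (⌊w x.1 / sketchP w x.1⌋ : ℝ) + (if x.2 then 1 else 0) else 0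


/-- Second moment bound for the random sketch:
for every unit vector `u`, `E[⟨u, ŵ⟩²] ≤ 1/4 + 2‖w‖²`. -/
theorem sketch_second_moment {d : ℕ} (hd : 0 < d) (w : Fin d → ℝ) (hw : w ≠ 0)
    (u : Fin d → ℝ) (hu : ∑ j, u j ^ 2 = 1) :
    ∑ x : Fin d × Bool, sketchMass w x * (∑ j, u j * sketchVal w x j) ^ 2 ≤
      1 / 4 + 2 * ∑ j, w j ^ 2 := by
  set S := ∑ j, w j ^ 2 with hSdef
  have hS : 0 < S := by
    obtain ⟨j, hj⟩ := Function.ne_iff.mp hw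
    exact Finset.sum_pos' (fun i _ => sq_nonneg _) ⟨j, Finset.mem_univ j, pow_two_pos_of_ne_zero hj⟩
  have hp_pos : ∀ i, 0 < sketchP w i := by
    intro i
    have h1 : 0 ≤ w i ^ 2 / (2 * S) := by positivity
    have h2 : 0 < 1 / (2 * (d : ℝ)) := by
      have : (0:ℝ) < d := by exact_mod_cast hd
      positivity
    unfold sketchP
    rw [← hSdef]
    linarith
  have hp_le : ∀ i, sketchP w i ≤ 1 := by
    intro i
    have h1 : w i ^ 2 ≤ S :=
      Finset.single_le_sum (f := fun j => w j ^ 2) (fun i _ => sq_nonneg _) (mem_univ i)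
    have h2 : w i ^ 2 / (2 * S) ≤ 1 / 2 := by
      rw [div_le_div_iff₀ (by linarith) (by norm_num)]; linarith
    have h3 : 1 / (2 * (d : ℝ)) ≤ 1 / 2 := by
      have : (1:ℝ) ≤ d := by exact_mod_cast hd
      rw [div_le_div_iff₀ (by linarith) (by norm_num)]; linarith
    unfold sketchP
    rw [← hSdef]
    linarith
  have hp_ge : ∀ i, w i ^ 2 / (2 * S) ≤ sketchP w i := by
    intro i
    have : (0:ℝ) < d := by exact_mod_cast hd
    have h2 : 0 < 1 / (2 * (d : ℝ)) := by positivity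
    unfold sketchP
    rw [← hSdef]
    linarith
  rw [Fintype.sum_prod_type]
  have key : ∀ i : Fin d, (∑ b : Bool,
      sketchMass w (i, b) * (∑ j, u j * sketchVal w (i, b) j) ^ 2) ≤
      u i ^ 2 * (2 * S + 1 / 4) := by
    intro i
    set p := sketchP w i with hp
    set m : ℝ := (⌊w i / p⌋ : ℝ) with hm
    set f : ℝ := w i / p - m with hf
    have hf0 : 0 ≤ f := by
      have := Int.floor_le (w i / p); rw [hf, hm]; linarith
    have hf1 : f ≤ 1 := by
      have := Int.lt_floor_add_one (w i / p); rw [hf, hm]; linarith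
    have hinner : ∀ b : Bool,
        (∑ j, u j * sketchVal w (i, b) j) = u i * (m + if b then 1 else 0) := by
      intro b
      rw [Finset.sum_eq_single i]
      · simp [sketchVal, hm, hp]
      · intro j _ hj; simp [sketchVal, hj]
      · simp
    rw [Fintype.sum_bool, hinner true, hinner false]
    have hmass_t : sketchMass w (i, true) = p * f := by simp [sketchMass, hf, hm, hp]
    have hmass_f : sketchMass w (i, false) = p * (1 - f) := by simp [sketchMass, hf, hm, hp]
    rw [hmass_t, hmass_f]
    have hpp : 0 < p := hp_pos i
    have hmf : p * (m + f) ^ 2 = w i ^ 2 / p := by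
      have : m + f = w i / p := by rw [hf]; ring
      rw [this]; field_simp
    have hb1 : w i ^ 2 / p ≤ 2 * S := by
      rw [div_le_iff₀ hpp]
      have := hp_ge i
      rw [← hp] at this
      calc w i ^ 2 = (w i ^ 2 / (2 * S)) * (2 * S) := by field_simp
        _ ≤ p * (2 * S) := by
            apply mul_le_mul_of_nonneg_right this (by linarith)
        _ = 2 * S * p := by ring
    have hb2 : p * (f * (1 - f)) ≤ 1 / 4 := by
      have h4 : f * (1 - f) ≤ 1 / 4 := by nlinarith [sq_nonneg (f - 1/2)]
      have hple := hp_le i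
      rw [← hp] at hple
      nlinarith [mul_nonneg hf0 (by linarith : (0:ℝ) ≤ 1 - f)]
    norm_num
    have hexp : p * f * (u i * (m + 1)) ^ 2 + p * (1 - f) * (u i * m) ^ 2
        = u i ^ 2 * (p * (m + f) ^ 2 + p * (f * (1 - f))) := by ring
    rw [hexp, hmf]
    have : p * (m + f) ^ 2 + p * (f * (1 - f)) ≤ 2 * S + 1 / 4 := by
      rw [hmf]; linarith
    nlinarith [sq_nonneg (u i), this, hmf]
  calc ∑ i : Fin d, ∑ b : Bool,
        sketchMass w (i, b) * (∑ j, u j * sketchVal w (i, b) j) ^ 2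
      ≤ ∑ i : Fin d, u i ^ 2 * (2 * S + 1 / 4) := Finset.sum_le_sum (fun i _ => key i)
    _ = (∑ i : Fin d, u i ^ 2) * (2 * S + 1 / 4) := by rw [← Finset.sum_mul]
    _ = 2 * S + 1 / 4 := by rw [hu, one_mul]
    _ = 1 / 4 + 2 * S := by ring
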